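/- Let R be a complete local ring with minimal primes p_1, …, p_t, and let Θ_R be the graph on vertices 1, …, t with an edge between distinct i and j exactly when p_i + p_j is not primary to the maximal ideal. Then Θ_R is connected if and only if the punctured spectrum Spec(R) \ {m} is a connected topological space. -/

import Mathlib

open IsLocalRing

/-- The graph `Θ_R` of a local ring `R`: vertices are the minimal primes of `R`, and two
distinct minimal primes `p`, `q` are joined by an edge exactly when `p + q` is not primary
to the maximal ideal, i.e. `√(p + q) ≠ m`. -/
def thetaGraph (R : Type*) [CommRing R] [IsLocalRing R] :
    SimpleGraph {p : Ideal R // p ∈ minimalPrimes R} where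
  Adj p q := p ≠ q ∧ (p.1 + q.1).radical ≠ maximalIdeal R
  symm := by
    constructor
    intro p q h
    exact ⟨h.1.symm, by rw [add_comm]; exact h.2⟩
  loopless := by
    constructor
    intro p h
    exact h.1 rfl

section Aux

variable {R : Type*} [CommRing R] [IsLocalRing R]

omit [IsLocalRing R] in
/-- minimal primes are prime -/
lemma aux_isPrime (p : {p : Ideal R // p ∈ minimalPrimes R}) : p.1.IsPrime := p.2.1.1

/-- the point of Spec attached to a minimal prime -/
noncomputable def auxPt (p : {p : Ideal R // p ∈ minimalPrimes R}) : PrimeSpectrum R :=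
  ⟨p.1, aux_isPrime p⟩

omit [IsLocalRing R] in
lemma aux_eq_of_le (p q : {p : Ideal R // p ∈ minimalPrimes R}) (h : p.1 ≤ q.1) : p = q := by
  have := q.2.2 ⟨aux_isPrime p, bot_le⟩ h
  exact Subtype.ext (le_antisymm h this)

lemma aux_nonempty : Nonempty {p : Ideal R // p ∈ minimalPrimes R} := by
  obtain ⟨p, hp, -⟩ := Ideal.exists_minimalPrimes_le (I := (⊥ : Ideal R))
    (J := maximalIdeal R) bot_le
  exact ⟨⟨p, hp⟩⟩

end Aux

/-- Let `R` be a complete local ring.  The graph `Θ_R` is connected if and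
only if the punctured spectrum `Spec R \ {m}` is a connected topological space (in the sense
that it is not the union of two disjoint nonempty open subsets). -/
theorem stmt5 {R : Type*} [CommRing R] [IsNoetherianRing R] [IsLocalRing R]
    [IsAdicComplete (maximalIdeal R) R] :
    (thetaGraph R).Connected ↔
      IsPreconnected {P : PrimeSpectrum R | P.asIdeal ≠ maximalIdeal R} := by
  have hfin : Finite {p : Ideal R // p ∈ minimalPrimes R} :=
    (minimalPrimes.finite_of_isNoetherianRing R).to_subtype
  set S : Set (PrimeSpectrum R) := {P | P.asIdeal ≠ maximalIdeal R} with hSdef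
  by_cases hS : S.Nonempty
  · -- every minimal prime is ≠ m
    have hmin : ∀ p : {p : Ideal R // p ∈ minimalPrimes R}, p.1 ≠ maximalIdeal R := by
      rintro p hpm
      obtain ⟨P, hP⟩ := hS
      have h1 : P.asIdeal ≤ p.1 := hpm ▸ le_maximalIdeal P.2.ne_top
      have h2 : p.1 ≤ P.asIdeal := p.2.2 ⟨P.2, bot_le⟩ h1
      exact hP (le_antisymm (le_maximalIdeal P.2.ne_top) (hpm ▸ h2))
    set T : {p : Ideal R // p ∈ minimalPrimes R} → Set (PrimeSpectrum R) :=
      fun i => {P | i.1 ≤ P.asIdeal ∧ P.asIdeal ≠ maximalIdeal R} with hTdef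
    have hTmem : ∀ i, auxPt i ∈ T i := fun i => ⟨le_refl _, hmin i⟩
    have hTpre : ∀ i, IsPreconnected (T i) := by
      intro i
      refine isPreconnected_singleton.subset_closure
        (Set.singleton_subset_iff.mpr (hTmem i)) ?_
      intro P hP
      rw [PrimeSpectrum.closure_singleton, PrimeSpectrum.mem_zeroLocus]
      exact fun x hx => hP.1 hx
    have hcover : S = ⋃ i, T i := by
      ext P
      rw [Set.mem_iUnion]
      constructor
      · intro hP
        obtain ⟨p, hp, hle⟩ :=
          @Ideal.exists_minimalPrimes_le _ _ ⊥ P.asIdeal P.2 bot_le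
        exact ⟨⟨p, hp⟩, hle, hP⟩
      · rintro ⟨i, hi⟩
        exact hi.2
    constructor
    · -- graph connected → punctured spectrum preconnected
      intro hconn
      rw [hcover]
      refine IsPreconnected.iUnion_of_reflTransGen hTpre ?_
      intro i j
      have hr := hconn.preconnected i j
      rw [SimpleGraph.reachable_iff_reflTransGen] at hr
      refine Relation.ReflTransGen.mono ?_ i j hr
      intro x y hxy
      have hm : x.1 + y.1 ≤ maximalIdeal R :=
        sup_le (le_maximalIdeal (aux_isPrime x).ne_top)
          (le_maximalIdeal (aux_isPrime y).ne_top)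
      by_contra hc
      rw [Set.not_nonempty_iff_eq_empty] at hc
      apply hxy.2
      rw [Ideal.radical_eq_sInf]
      refine le_antisymm (sInf_le ⟨hm, inferInstance⟩) (le_sInf ?_)
      rintro J ⟨hJ1, hJ2⟩
      have hJm : J = maximalIdeal R := by
        by_contra hJne
        have : (⟨J, hJ2⟩ : PrimeSpectrum R) ∈ T x ∩ T y :=
          ⟨⟨le_sup_left.trans hJ1, hJne⟩, ⟨le_sup_right.trans hJ1, hJne⟩⟩
        rw [hc] at this
        exact this
      exact hJm.ge
    · -- punctured spectrum preconnected → graph connected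
      intro hpre
      rw [SimpleGraph.connected_iff]
      refine ⟨fun a b => ?_, aux_nonempty⟩
      by_contra hr
      set A : Set (PrimeSpectrum R) :=
        ⋃ i : {i // (thetaGraph R).Reachable a i},
          PrimeSpectrum.zeroLocus (i.1.1 : Set R) with hAdef
      set B : Set (PrimeSpectrum R) :=
        ⋃ i : {i // ¬ (thetaGraph R).Reachable a i},
          PrimeSpectrum.zeroLocus (i.1.1 : Set R) with hBdef
      have hA : IsClosed A :=
        isClosed_iUnion_of_finite fun i => PrimeSpectrum.isClosed_zeroLocus _
      have hB : IsClosed B :=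
        isClosed_iUnion_of_finite fun i => PrimeSpectrum.isClosed_zeroLocus _
      have hmemA : ∀ (P : PrimeSpectrum R), P ∈ A ↔
          ∃ i : {p : Ideal R // p ∈ minimalPrimes R},
            (thetaGraph R).Reachable a i ∧ i.1 ≤ P.asIdeal := by
        intro P
        rw [hAdef, Set.mem_iUnion]
        constructor
        · rintro ⟨i, hi⟩
          exact ⟨i.1, i.2, fun x hx => hi hx⟩
        · rintro ⟨i, h1, h2⟩
          exact ⟨⟨i, h1⟩, fun x hx => h2 hx⟩
      have hmemB : ∀ (P : PrimeSpectrum R), P ∈ B ↔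
          ∃ i : {p : Ideal R // p ∈ minimalPrimes R},
            ¬ (thetaGraph R).Reachable a i ∧ i.1 ≤ P.asIdeal := by
        intro P
        rw [hBdef, Set.mem_iUnion]
        constructor
        · rintro ⟨i, hi⟩
          exact ⟨i.1, i.2, fun x hx => hi hx⟩
        · rintro ⟨i, h1, h2⟩
          exact ⟨⟨i, h1⟩, fun x hx => h2 hx⟩
      have hsub : S ⊆ Aᶜ ∪ Bᶜ := by
        intro P hP
        rw [Set.mem_union]
        by_contra h
        push_neg at h
        simp only [Set.notMem_compl_iff] at h
        obtain ⟨hPA, hPB⟩ := h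
        obtain ⟨i, hri, hiP⟩ := (hmemA P).mp hPA
        obtain ⟨j, hrj, hjP⟩ := (hmemB P).mp hPB
        have hadj : (thetaGraph R).Adj i j := by
          refine ⟨?_, ?_⟩
          · rintro rfl
            exact hrj hri
          · intro heq
            apply hP
            refine le_antisymm (le_maximalIdeal P.2.ne_top) ?_
            rw [← heq]
            exact P.2.radical_le_iff.mpr (sup_le hiP hjP)
        exact hrj (hri.trans hadj.reachable)
      have hdisj : S ∩ (Aᶜ ∩ Bᶜ) = ∅ := by
        rw [Set.eq_empty_iff_forall_notMem]
        rintro P ⟨hPS, hPA, hPB⟩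
        obtain ⟨p, hp, hle⟩ :=
          @Ideal.exists_minimalPrimes_le _ _ ⊥ P.asIdeal P.2 bot_le
        by_cases hreach : (thetaGraph R).Reachable a ⟨p, hp⟩
        · exact hPA ((hmemA P).mpr ⟨⟨p, hp⟩, hreach, hle⟩)
        · exact hPB ((hmemB P).mpr ⟨⟨p, hp⟩, hreach, hle⟩)
      have key := hpre Aᶜ Bᶜ hA.isOpen_compl hB.isOpen_compl hsub
      have h1 : (S ∩ Aᶜ).Nonempty := by
        refine ⟨auxPt b, hmin b, ?_⟩
        intro hmem
        obtain ⟨i, hri, hiP⟩ := (hmemA (auxPt b)).mp hmem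
        rw [aux_eq_of_le i b hiP] at hri
        exact hr hri
      have h2 : (S ∩ Bᶜ).Nonempty := by
        refine ⟨auxPt a, hmin a, ?_⟩
        intro hmem
        obtain ⟨j, hrj, hjP⟩ := (hmemB (auxPt a)).mp hmem
        rw [aux_eq_of_le j a hjP] at hrj
        exact hrj (SimpleGraph.Reachable.refl a)
      rw [hdisj] at key
      exact Set.not_nonempty_empty (key h1 h2)
  · -- S empty: both sides hold
    rw [Set.not_nonempty_iff_eq_empty] at hS
    have hsub : Subsingleton {p : Ideal R // p ∈ minimalPrimes R} := by
      constructor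
      intro p q
      have hp : p.1 = maximalIdeal R :=
        not_not.mp (fun h => Set.eq_empty_iff_forall_notMem.mp hS (auxPt p) h)
      have hq : q.1 = maximalIdeal R :=
        not_not.mp (fun h => Set.eq_empty_iff_forall_notMem.mp hS (auxPt q) h)
      exact Subtype.ext (hp.trans hq.symm)
    constructor
    · intro _
      rw [hS]
      exact isPreconnected_empty
    · intro _
      rw [SimpleGraph.connected_iff]
      refine ⟨fun u v => ?_, aux_nonempty⟩
      rw [Subsingleton.elim u v]
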